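/- Let n, k, q be positive integers with k + q ≤ n − 1, let ζ > 0 and α > 1/2 be real numbers, and define σ_j = ζ j^{-α} for j = 1, …, n. Suppose a real number E ≥ 0 satisfies E ≤ (1 + 16√(1 + k/(q+1))) σ_{k+1} + (8√(k+q)/(q+1)) (Σ_{j=k+1}^{n} σ_j²)^{1/2}. Then E ≤ (1 + 16√(1 + k/(q+1)) + (8√(k+q)/(q+1)) √(k/(2α−1)) ((k+1)/k)^{α}) σ_{k+1}. -/

import Mathlib

open Real Finset

lemma sum_rpow_tail_le (α : ℝ) (hα : 1 / 2 < α) (k n : ℕ) (hk : 0 < k) (hkn : k ≤ n) :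
    ∑ j ∈ Finset.Icc (k + 1) n, (j : ℝ) ^ (-(2 * α)) ≤ (k : ℝ) ^ (1 - 2 * α) / (2 * α - 1) := by
  have hkpos : (0 : ℝ) < k := by exact_mod_cast hk
  have hmap : Finset.Icc (k + 1) n = Finset.map ⟨Nat.succ, Nat.succ_injective⟩ (Finset.Ico k n) := by
    ext x
    simp only [Finset.mem_Icc, Finset.mem_map, Finset.mem_Ico, Function.Embedding.coeFn_mk,
      Nat.succ_eq_add_one]
    constructor
    · rintro ⟨h1, h2⟩; exact ⟨x - 1, ⟨by omega, by omega⟩, by omega⟩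
    · rintro ⟨i, ⟨h1, h2⟩, rfl⟩; omega
  rw [hmap, Finset.sum_map]
  have hanti : AntitoneOn (fun x : ℝ => x ^ (-(2 * α))) (Set.Icc (k : ℝ) n) := by
    intro x hx y hy hxy
    exact Real.rpow_le_rpow_of_nonpos (lt_of_lt_of_le hkpos hx.1) hxy (by nlinarith)
  have hsum := AntitoneOn.sum_le_integral_Ico hkn hanti
  have hint : ∫ x in (k : ℝ)..(n : ℝ), x ^ (-(2 * α)) =
      ((n : ℝ) ^ (-(2 * α) + 1) - (k : ℝ) ^ (-(2 * α) + 1)) / (-(2 * α) + 1) := by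
    apply integral_rpow
    right
    constructor
    · intro hcon; nlinarith [hcon]
    · rw [Set.uIcc_of_le (by exact_mod_cast hkn)]
      intro hmem
      exact absurd hmem.1 (by push_neg; exact hkpos)
  have hfin : ((n : ℝ) ^ (-(2 * α) + 1) - (k : ℝ) ^ (-(2 * α) + 1)) / (-(2 * α) + 1) ≤
      (k : ℝ) ^ (1 - 2 * α) / (2 * α - 1) := by
    have h1 : (-(2 * α) + 1) = -(2 * α - 1) := by ring
    have h2 : (0 : ℝ) < 2 * α - 1 := by linarith
    have hnn : (0 : ℝ) ≤ (n : ℝ) ^ (-(2 * α) + 1) := Real.rpow_nonneg (by positivity) _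
    have heq : (-(2 * α) + 1) = (1 - 2 * α) := by ring
    rw [heq]
    have hne : (2 * α - 1) ≠ 0 := by linarith
    have hne' : (1 - 2 * α) ≠ 0 := by linarith
    have hrw : ((n : ℝ) ^ (1 - 2 * α) - (k : ℝ) ^ (1 - 2 * α)) / (1 - 2 * α) =
        ((k : ℝ) ^ (1 - 2 * α) - (n : ℝ) ^ (1 - 2 * α)) / (2 * α - 1) := by
      field_simp
      ring
    rw [hrw]
    rw [div_le_div_iff₀ h2 h2]
    nlinarith [Real.rpow_nonneg (show (0:ℝ) ≤ (n:ℝ) by positivity) (1 - 2 * α)]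
  calc ∑ i ∈ Finset.Ico k n, ((⟨Nat.succ, Nat.succ_injective⟩ : ℕ ↪ ℕ) i : ℝ) ^ (-(2 * α))
      = ∑ i ∈ Finset.Ico k n, (fun x : ℝ => x ^ (-(2 * α))) ((i : ℕ) + 1 : ℕ) := by
        apply Finset.sum_congr rfl; intro i _; simp [Nat.succ_eq_add_one]
    _ ≤ ∫ x in (k : ℝ)..(n : ℝ), x ^ (-(2 * α)) := hsum
    _ ≤ _ := by rw [hint]; exact hfin


/-- Deterministic core of Theorem 2.2 (RSVD error bound for moderately and
mildly ill-posed problems): if `σ_j = ζ j^{-α}` with `ζ > 0`, `α > 1/2`, and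
`E ≤ (1 + 16√(1 + k/(q+1))) σ_{k+1} + (8√(k+q)/(q+1)) (Σ_{j=k+1}^n σ_j²)^{1/2}`,
then `E ≤ (1 + 16√(1 + k/(q+1)) + (8√(k+q)/(q+1)) √(k/(2α-1)) ((k+1)/k)^α) σ_{k+1}`. -/
theorem rsvd_error_bound_moderately_ill_posed
    (n k q : ℕ) (hn : 0 < n) (hk : 0 < k) (hq : 0 < q) (hkq : k + q + 1 ≤ n)
    (ζ α : ℝ) (hζ : 0 < ζ) (hα : 1 / 2 < α)
    (σ : ℕ → ℝ) (hσ : ∀ j, σ j = ζ * (j : ℝ) ^ (-α))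
    (E : ℝ) (hE : 0 ≤ E)
    (h : E ≤ (1 + 16 * Real.sqrt (1 + (k : ℝ) / ((q : ℝ) + 1))) * σ (k + 1) +
        (8 * Real.sqrt ((k : ℝ) + (q : ℝ)) / ((q : ℝ) + 1)) *
          Real.sqrt (∑ j ∈ Finset.Icc (k + 1) n, (σ j) ^ 2)) :
    E ≤ (1 + 16 * Real.sqrt (1 + (k : ℝ) / ((q : ℝ) + 1)) +
        (8 * Real.sqrt ((k : ℝ) + (q : ℝ)) / ((q : ℝ) + 1)) *
          Real.sqrt ((k : ℝ) / (2 * α - 1)) * (((k : ℝ) + 1) / (k : ℝ)) ^ α) * σ (k + 1) := by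
  have hkpos : (0 : ℝ) < k := by exact_mod_cast hk
  have hk1pos : (0 : ℝ) < (k : ℝ) + 1 := by positivity
  have h2a : (0 : ℝ) < 2 * α - 1 := by linarith
  have hkn : k ≤ n := by omega
  -- the sum rewrite
  have hterm : ∀ j ∈ Finset.Icc (k + 1) n, (σ j) ^ 2 = ζ ^ 2 * (j : ℝ) ^ (-(2 * α)) := by
    intro j hj
    have hj1 : 1 ≤ j := by simp only [Finset.mem_Icc] at hj; omega
    have hjpos : (0 : ℝ) ≤ (j : ℝ) := by positivity
    rw [hσ j, mul_pow, ← Real.rpow_natCast ((j : ℝ) ^ (-α)) 2, ← Real.rpow_mul hjpos]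
    norm_num
    left
    ring
  have hsumeq : ∑ j ∈ Finset.Icc (k + 1) n, (σ j) ^ 2 =
      ζ ^ 2 * ∑ j ∈ Finset.Icc (k + 1) n, (j : ℝ) ^ (-(2 * α)) := by
    rw [Finset.mul_sum]
    exact Finset.sum_congr rfl hterm
  have hsumle : ∑ j ∈ Finset.Icc (k + 1) n, (σ j) ^ 2 ≤
      ζ ^ 2 * ((k : ℝ) ^ (1 - 2 * α) / (2 * α - 1)) := by
    rw [hsumeq]
    exact mul_le_mul_of_nonneg_left (sum_rpow_tail_le α hα k n hk hkn) (by positivity)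
  -- rewrite the RHS constant
  have hka : (0 : ℝ) < (k : ℝ) ^ α := Real.rpow_pos_of_pos hkpos α
  have hk1a : (0 : ℝ) < ((k : ℝ) + 1) ^ α := Real.rpow_pos_of_pos hk1pos α
  have hratio : (((k : ℝ) + 1) / (k : ℝ)) ^ α * ((k : ℝ) + 1) ^ (-α) = (k : ℝ) ^ (-α) := by
    rw [Real.div_rpow (by positivity) (by positivity), Real.rpow_neg (by positivity),
      Real.rpow_neg (by positivity)]
    field_simp
  have hsqk : Real.sqrt ((k : ℝ) / (2 * α - 1)) * (k : ℝ) ^ (-α) =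
      Real.sqrt ((k : ℝ) ^ (1 - 2 * α) / (2 * α - 1)) := by
    have h1 : (k : ℝ) ^ (1 - 2 * α) / (2 * α - 1) =
        ((k : ℝ) / (2 * α - 1)) * ((k : ℝ) ^ (-α)) ^ 2 := by
      rw [← Real.rpow_natCast ((k : ℝ) ^ (-α)) 2, ← Real.rpow_mul (le_of_lt hkpos)]
      rw [show (-α) * (2 : ℕ) = -(2 * α) by push_cast; ring]
      rw [show (1 : ℝ) - 2 * α = 1 + (-(2 * α)) by ring, Real.rpow_add hkpos, Real.rpow_one]
      ring
    rw [h1, Real.sqrt_mul (by positivity), Real.sqrt_sq (le_of_lt (Real.rpow_pos_of_pos hkpos _))]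
  have hσk1 : σ (k + 1) = ζ * ((k : ℝ) + 1) ^ (-α) := by rw [hσ (k + 1)]; push_cast; ring_nf
  have hrhs : Real.sqrt ((k : ℝ) / (2 * α - 1)) * (((k : ℝ) + 1) / (k : ℝ)) ^ α * σ (k + 1) =
      Real.sqrt (ζ ^ 2 * ((k : ℝ) ^ (1 - 2 * α) / (2 * α - 1))) := by
    rw [hσk1, Real.sqrt_mul (by positivity), Real.sqrt_sq (le_of_lt hζ)]
    rw [← hsqk, ← hratio]
    ring
  have hkey : Real.sqrt (∑ j ∈ Finset.Icc (k + 1) n, (σ j) ^ 2) ≤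
      Real.sqrt ((k : ℝ) / (2 * α - 1)) * (((k : ℝ) + 1) / (k : ℝ)) ^ α * σ (k + 1) := by
    rw [hrhs]
    exact Real.sqrt_le_sqrt hsumle
  have hB : (0 : ℝ) ≤ 8 * Real.sqrt ((k : ℝ) + (q : ℝ)) / ((q : ℝ) + 1) := by positivity
  calc E ≤ (1 + 16 * Real.sqrt (1 + (k : ℝ) / ((q : ℝ) + 1))) * σ (k + 1) +
        (8 * Real.sqrt ((k : ℝ) + (q : ℝ)) / ((q : ℝ) + 1)) *
          Real.sqrt (∑ j ∈ Finset.Icc (k + 1) n, (σ j) ^ 2) := h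
    _ ≤ (1 + 16 * Real.sqrt (1 + (k : ℝ) / ((q : ℝ) + 1))) * σ (k + 1) +
        (8 * Real.sqrt ((k : ℝ) + (q : ℝ)) / ((q : ℝ) + 1)) *
          (Real.sqrt ((k : ℝ) / (2 * α - 1)) * (((k : ℝ) + 1) / (k : ℝ)) ^ α * σ (k + 1)) := by
        exact add_le_add_right (mul_le_mul_of_nonneg_left hkey hB) _
    _ = _ := by ring
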